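/- Let H1 and H2 be connected finite simple graphs on disjoint vertex sets, let v1 ∈ V(H1) and v2 ∈ V(H2), and let G be the graph obtained from H1 and H2 by identifying v1 and v2 as a single vertex v. Then: (i) for all i, j ∈ V(H1), f_G(i,j) = τ(H2)·f_{H1}(i,j) (where v1 is identified with v); (ii) for all i, j ∈ V(H2), f_G(i,j) = τ(H1)·f_{H2}(i,j); and (iii) for all i ∈ V(H1)∖{v1} and j ∈ V(H2)∖{v2}, f_G(i,j) = τ(H2)·f_{H1}(i,v1) + τ(H1)·f_{H2}(v2,j). -/

import Mathlib

open SimpleGraph Filter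

namespace Braess

universe u

variable {V : Type*}

/-- The number of spanning trees of `G`. -/
noncomputable def tau (G : SimpleGraph V) : ℕ :=
  Nat.card {H : SimpleGraph V // H ≤ G ∧ H.IsTree}

/-- `H` is a 2-forest (spanning forest with exactly two components) of `G`. -/
def IsTwoForest (G H : SimpleGraph V) : Prop :=
  H ≤ G ∧ H.IsAcyclic ∧ Nat.card H.ConnectedComponent = 2

/-- `f_G(i,j)`: the number of 2-forests of `G` with `i` and `j` in different components. -/
noncomputable def fsep (G : SimpleGraph V) (i j : V) : ℕ :=
  Nat.card {H : SimpleGraph V // IsTwoForest G H ∧ ¬ H.Reachable i j}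

/-- `q_{i,j}`: the number of 2-forests of `G` with `i` and `j` in one component and `v`
in the other. -/
noncomputable def qEntry (G : SimpleGraph V) (v i j : V) : ℕ :=
  Nat.card {H : SimpleGraph V // IsTwoForest G H ∧ H.Reachable i j ∧ ¬ H.Reachable i v}

/-- Degree of a vertex. -/
noncomputable def deg (G : SimpleGraph V) (i : V) : ℕ :=
  Nat.card (G.neighborSet i)

/-- Number of edges of `G`. -/
noncomputable def edgeCount (G : SimpleGraph V) : ℕ :=
  Nat.card G.edgeSet

/-- `d_G^T F_G d_G`. -/
noncomputable def dFd (G : SimpleGraph V) : ℚ :=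
  ∑ᶠ i, ∑ᶠ j, (deg G i : ℚ) * (fsep G i j : ℚ) * (deg G j : ℚ)

/-- `d_G^T f^v_G`. -/
noncomputable def dfv (G : SimpleGraph V) (v : V) : ℚ :=
  ∑ᶠ i, (deg G i : ℚ) * (fsep G i v : ℚ)

/-- `d_G^T Q_{G,v} d_G`. -/
noncomputable def dQd (G : SimpleGraph V) (v : V) : ℚ :=
  ∑ᶠ i, ∑ᶠ j, (deg G i : ℚ) * (qEntry G v i j : ℚ) * (deg G j : ℚ)

/-- `φ_G(v) = d_G^T (2 f^v_G 𝟙^T − F_G) d_G`. -/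
noncomputable def phi (G : SimpleGraph V) (v : V) : ℚ :=
  ∑ᶠ i, ∑ᶠ j, (deg G i : ℚ) * (2 * (fsep G i v : ℚ) - (fsep G i j : ℚ)) * (deg G j : ℚ)

/-- Kemeny's constant, via the combinatorial formula. -/
noncomputable def kemeny (G : SimpleGraph V) : ℚ :=
  dFd G / (4 * (edgeCount G : ℚ) * (tau G : ℚ))

/-- Eccentricity of a vertex. -/
noncomputable def ecc (G : SimpleGraph V) (v : V) : ℕ :=
  sSup (Set.range (G.dist v))

/-- The graph `G̃(v,k₁,k₂)`, obtained from `G` by attaching at `v` two pendent paths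
with `k₁` and `k₂` new vertices respectively. -/
def attach (G : SimpleGraph V) (v : V) (k₁ k₂ : ℕ) :
    SimpleGraph (V ⊕ (Fin k₁ ⊕ Fin k₂)) where
  Adj x y :=
    match x, y with
    | .inl a, .inl b => G.Adj a b
    | .inl a, .inr (.inl i) => a = v ∧ (i : ℕ) = 0
    | .inl a, .inr (.inr i) => a = v ∧ (i : ℕ) = 0
    | .inr (.inl i), .inl b => b = v ∧ (i : ℕ) = 0
    | .inr (.inr i), .inl b => b = v ∧ (i : ℕ) = 0
    | .inr (.inl i), .inr (.inl j) => (i : ℕ) + 1 = (j : ℕ) ∨ (j : ℕ) + 1 = (i : ℕ)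
    | .inr (.inr i), .inr (.inr j) => (i : ℕ) + 1 = (j : ℕ) ∨ (j : ℕ) + 1 = (i : ℕ)
    | .inr (.inl _), .inr (.inr _) => False
    | .inr (.inr _), .inr (.inl _) => False
  symm := by
    constructor
    rintro (a | (i | i)) (b | (j | j)) h
    · exact G.adj_symm h
    · exact h
    · exact h
    · exact h
    · exact h.symm
    · exact h.elim
    · exact h
    · exact h.elim
    · exact h.symm
  loopless := by
    constructor
    rintro (a | (i | i)) h
    · exact G.irrefl h
    · omega
    · omega

/-- The far endpoint of the first attached path (it is `v` itself when `k₁ = 0`). -/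
def farEnd₁ (v : V) (k₁ k₂ : ℕ) : V ⊕ (Fin k₁ ⊕ Fin k₂) :=
  if h : 0 < k₁ then .inr (.inl ⟨k₁ - 1, by omega⟩) else .inl v

/-- The far endpoint of the second attached path (it is `v` itself when `k₂ = 0`). -/
def farEnd₂ (v : V) (k₁ k₂ : ℕ) : V ⊕ (Fin k₁ ⊕ Fin k₂) :=
  if h : 0 < k₂ then .inr (.inr ⟨k₂ - 1, by omega⟩) else .inl v

/-- The graph `Ĝ(v,k₁,k₂)`: `G̃(v,k₁,k₂)` together with the extra edge joining the far
endpoints of the two attached paths. -/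
def attachEdge (G : SimpleGraph V) (v : V) (k₁ k₂ : ℕ) :
    SimpleGraph (V ⊕ (Fin k₁ ⊕ Fin k₂)) :=
  attach G v k₁ k₂ ⊔ fromEdgeSet {s(farEnd₁ v k₁ k₂, farEnd₂ v k₁ k₂)}

/-- `G` is `(v,k₁,k₂)`-paradoxical. -/
def IsParadoxical (G : SimpleGraph V) (v : V) (k₁ k₂ : ℕ) : Prop :=
  kemeny (attach G v k₁ k₂) < kemeny (attachEdge G v k₁ k₂)

/-- `φ₁(k₁,k₂)`. -/
noncomputable def kphi₁ (k₁ k₂ : ℕ) : ℚ :=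
  -(2 / 3) * ((k₁ : ℚ) + k₂) * ((k₁ : ℚ) + k₂ - 1) + 2 * k₁ * k₂

/-- `φ₂(k₁,k₂)`. -/
noncomputable def kphi₂ (k₁ k₂ : ℕ) : ℚ :=
  -((k₁ : ℚ) + k₂) * (5 * ((k₁ : ℚ) + k₂) ^ 2 - ((k₁ : ℚ) + k₂) - 1)
    + 12 * k₁ * k₂ * ((k₁ : ℚ) + k₂ + 1)

/-- `φ₃(k₁,k₂)`. -/
noncomputable def kphi₃ (k₁ k₂ : ℕ) : ℚ :=
  -((k₁ : ℚ) + k₂ + 1) * ((k₁ : ℚ) + k₂) * ((k₁ : ℚ) + k₂ - 1) ^ 2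

/-- `Φ_G(v,k₁,k₂)`, with `k = k₁ + k₂ + 1`. -/
noncomputable def Phi (G : SimpleGraph V) (v : V) (k₁ k₂ : ℕ) : ℚ :=
  ((k₁ : ℚ) + k₂ + 1) * phi G v
    + 4 * (edgeCount G : ℚ) ^ 2 * (tau G : ℚ) * ((k₁ : ℚ) + k₂ + 1) * kphi₁ k₁ k₂
    + (2 * (edgeCount G : ℚ) * (tau G : ℚ) * ((k₁ : ℚ) + k₂ + 1) / 3) * kphi₂ k₁ k₂
    + (2 * (tau G : ℚ) * ((k₁ : ℚ) + k₂ + 1) / 3) * kphi₃ k₁ k₂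

/-- A sequence of graphs with specified vertices is asymptotically paradoxical. -/
def AsympParadoxical {W : ℕ → Type u} (G : ∀ n, SimpleGraph (W n)) (v : ∀ n, W n) : Prop :=
  ∀ l₁ l₂ : ℕ, 2 ≤ l₁ + l₂ → ∃ N, ∀ n ≥ N, IsParadoxical (G n) (v n) l₁ l₂

section Glue

variable {V₁ V₂ : Type*}

/-- The graph obtained from `H₁` and `H₂` by identifying `v₁ ∈ V(H₁)` and `v₂ ∈ V(H₂)` as a
single vertex (represented by `Sum.inl v₁`). -/
def glue (H₁ : SimpleGraph V₁) (H₂ : SimpleGraph V₂) (v₁ : V₁) (v₂ : V₂) :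
    SimpleGraph (V₁ ⊕ {x : V₂ // x ≠ v₂}) where
  Adj x y :=
    match x, y with
    | .inl a, .inl b => H₁.Adj a b
    | .inl a, .inr b => a = v₁ ∧ H₂.Adj v₂ b.1
    | .inr a, .inl b => b = v₁ ∧ H₂.Adj v₂ a.1
    | .inr a, .inr b => H₂.Adj a.1 b.1
  symm := by
    constructor
    rintro (a | a) (b | b) h
    · exact H₁.adj_symm h
    · exact h
    · exact h
    · exact H₂.adj_symm h
  loopless := by
    constructor
    rintro (a | a) h
    · exact H₁.irrefl h
    · exact H₂.irrefl h

/-- The canonical map from `V₂` to the vertex set of the glued graph. -/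
def glueRight [DecidableEq V₂] (v₁ : V₁) (v₂ : V₂) (x : V₂) : V₁ ⊕ {y : V₂ // y ≠ v₂} :=
  if h : x = v₂ then .inl v₁ else .inr ⟨x, h⟩

end Glue

section MultiGlue

variable {ι : Type*} {W : ι → Type*} {V₀ : Type*}

/-- The graph obtained from the family `H i` and `G` by identifying all the vertices `w i`
and `v` as a single vertex (represented by `Sum.inl v`). -/
def multiGlue (H : ∀ i, SimpleGraph (W i)) (w : ∀ i, W i)
    (G : SimpleGraph V₀) (v : V₀) :
    SimpleGraph (V₀ ⊕ Σ i, {x : W i // x ≠ w i}) where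
  Adj x y :=
    match x, y with
    | .inl a, .inl b => G.Adj a b
    | .inl a, .inr ⟨i, b⟩ => a = v ∧ (H i).Adj (w i) b.1
    | .inr ⟨i, a⟩, .inl b => b = v ∧ (H i).Adj (w i) a.1
    | .inr ⟨i, a⟩, .inr ⟨j, b⟩ => ∃ h : i = j, (H j).Adj (h ▸ a).1 b.1
  symm := by
    constructor
    rintro (a | ⟨i, a⟩) (b | ⟨j, b⟩) h
    · exact G.adj_symm h
    · exact h
    · exact h
    · obtain ⟨rfl, h⟩ := h
      exact ⟨rfl, (H i).adj_symm h⟩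
  loopless := by
    constructor
    rintro (a | ⟨i, a⟩) h
    · exact G.irrefl h
    · obtain ⟨h', h⟩ := h
      exact (H i).irrefl h

end MultiGlue

/-- The broom `𝓑_{n,k}`: a path on the `k` vertices `0, 1, …, k−1` together with `n − k`
pendent vertices (the vertices `k, …, n−1`) all adjacent to the vertex `0`. -/
def broomGraph (n k : ℕ) : SimpleGraph (Fin n) where
  Adj i j :=
    ((i : ℕ) + 1 = (j : ℕ) ∧ (j : ℕ) < k) ∨ ((j : ℕ) + 1 = (i : ℕ) ∧ (i : ℕ) < k) ∨
      ((i : ℕ) = 0 ∧ k ≤ (j : ℕ) ∧ i ≠ j) ∨ ((j : ℕ) = 0 ∧ k ≤ (i : ℕ) ∧ i ≠ j)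
  symm := by
    constructor
    intro i j h
    tauto
  loopless := by
    constructor
    rintro i (⟨h, -⟩ | ⟨h, -⟩ | ⟨-, -, h⟩ | ⟨-, -, h⟩)
    · omega
    · omega
    · exact h rfl
    · exact h rfl

section Branch

variable (G : SimpleGraph V) (v : V)

/-- The vertex set of the branch of `G` at `v` corresponding to the connected component `c`
of `G − v`. -/
def branchSet (c : (G.induce {x : V | x ≠ v}).ConnectedComponent) : Set V :=
  insert v {x : V | ∃ h : x ≠ v,
    (G.induce {x : V | x ≠ v}).connectedComponentMk ⟨x, h⟩ = c}

/-- The vertex set of the complementary part `G'_c`: everything outside the branch at `c`,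
together with `v`. -/
def cobranchSet (c : (G.induce {x : V | x ≠ v}).ConnectedComponent) : Set V :=
  insert v {x : V | ∃ h : x ≠ v,
    (G.induce {x : V | x ≠ v}).connectedComponentMk ⟨x, h⟩ ≠ c}

end Branch

section Sequence

/-- `Tnew` is obtained from `Told` by adding one new pendent vertex (the last vertex). -/
def AddPendentStep {n : ℕ} (Told : SimpleGraph (Fin (n + 1)))
    (Tnew : SimpleGraph (Fin (n + 2))) : Prop :=
  (∀ a b : Fin (n + 1), Tnew.Adj a.castSucc b.castSucc ↔ Told.Adj a b) ∧
    ∃ u : Fin (n + 1), ∀ x : Fin (n + 1), Tnew.Adj (Fin.last (n + 1)) x.castSucc ↔ x = u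

/-- `Tnew` is obtained from `Told` by subdividing one edge, the new (last) vertex being
placed in the middle of it. -/
def SubdivideStep {n : ℕ} (Told : SimpleGraph (Fin (n + 1)))
    (Tnew : SimpleGraph (Fin (n + 2))) : Prop :=
  ∃ a b : Fin (n + 1), Told.Adj a b ∧
    (∀ x y : Fin (n + 1), Tnew.Adj x.castSucc y.castSucc ↔ (Told.Adj x y ∧ s(x, y) ≠ s(a, b))) ∧
    (∀ x : Fin (n + 1), Tnew.Adj (Fin.last (n + 1)) x.castSucc ↔ (x = a ∨ x = b))

/-- The vertex set of the branch of `T` at the vertex `0` containing the vertex `w`. -/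
def branchSetAt {m : ℕ} (T : SimpleGraph (Fin (m + 1))) (w : Fin (m + 1)) :
    Set (Fin (m + 1)) :=
  insert 0 {y : Fin (m + 1) | ∃ (hy : y ≠ 0) (hw : w ≠ 0),
    (T.induce {z : Fin (m + 1) | z ≠ 0}).Reachable ⟨y, hy⟩ ⟨w, hw⟩}

/-- The eccentricity of the vertex `0` in the branch of `T` at `0` containing `w`. -/
noncomputable def branchEcc {m : ℕ} (T : SimpleGraph (Fin (m + 1))) (w : Fin (m + 1)) : ℕ :=
  ecc (T.induce (branchSetAt T w)) ⟨0, Set.mem_insert _ _⟩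

/-- `f = Θ(g)` (big Theta) for `ℕ`-valued sequences. -/
def IsBigTheta (f g : ℕ → ℕ) : Prop :=
  ∃ c₁ c₂ : ℚ, 0 < c₁ ∧ 0 < c₂ ∧
    ∃ N, ∀ n ≥ N, c₁ * (g n : ℚ) ≤ (f n : ℚ) ∧ (f n : ℚ) ≤ c₂ * (g n : ℚ)

/-- `β_n`: the number of branches of `T n` at the vertex `0` whose eccentricity function (in
later members of the sequence, under the consistent indexing that tracks each branch by the
vertices it contains) is `Θ` of the eccentricity of `0`. -/
noncomputable def beta (T : ∀ n : ℕ, SimpleGraph (Fin (n + 1))) (n : ℕ) : ℕ :=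
  Nat.card {c : ((T n).induce {z : Fin (n + 1) | z ≠ 0}).ConnectedComponent //
    ∃ (x : Fin (n + 1)) (hx : x ≠ 0),
      ((T n).induce {z : Fin (n + 1) | z ≠ 0}).connectedComponentMk ⟨x, hx⟩ = c ∧
      IsBigTheta
        (fun m => if h : n ≤ m then branchEcc (T m) (Fin.castLE (by omega) x) else 0)
        (fun m => ecc (T m) 0)}

end Sequence


section Stmt1Aux

variable {V₁ V₂ : Type*} [DecidableEq V₂] {v₁ : V₁} {v₂ : V₂}
variable {F₁ H₁ : SimpleGraph V₁} {F₂ H₂ : SimpleGraph V₂}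

instance ccFinite {V : Type*} [Finite V] (G : SimpleGraph V) :
    Finite G.ConnectedComponent :=
  Quot.finite _

lemma glueRight_self : glueRight v₁ v₂ v₂ = Sum.inl v₁ := dif_pos rfl

lemma glueRight_ne {x : V₂} (h : x ≠ v₂) : glueRight v₁ v₂ x = Sum.inr ⟨x, h⟩ := dif_neg h

lemma glue_adj_inl_inl {a b : V₁} :
    (glue H₁ H₂ v₁ v₂).Adj (.inl a) (.inl b) ↔ H₁.Adj a b := Iff.rfl

lemma glue_adj_inl_inr {a : V₁} {b : {x : V₂ // x ≠ v₂}} :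
    (glue H₁ H₂ v₁ v₂).Adj (.inl a) (.inr b) ↔ a = v₁ ∧ H₂.Adj v₂ b.1 := Iff.rfl

lemma glue_adj_inr_inl {a : {x : V₂ // x ≠ v₂}} {b : V₁} :
    (glue H₁ H₂ v₁ v₂).Adj (.inr a) (.inl b) ↔ b = v₁ ∧ H₂.Adj v₂ a.1 := Iff.rfl

lemma glue_adj_inr_inr {a b : {x : V₂ // x ≠ v₂}} :
    (glue H₁ H₂ v₁ v₂).Adj (.inr a) (.inr b) ↔ H₂.Adj a.1 b.1 := Iff.rfl

lemma glue_adj_right {a b : V₂} :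
    (glue H₁ H₂ v₁ v₂).Adj (glueRight v₁ v₂ a) (glueRight v₁ v₂ b) ↔ H₂.Adj a b := by
  by_cases ha : a = v₂ <;> by_cases hb : b = v₂
  · subst ha; subst hb
    rw [glueRight_self]
    simp [glue_adj_inl_inl]
  · subst ha
    rw [glueRight_self, glueRight_ne hb, glue_adj_inl_inr]
    simp
  · subst hb
    rw [glueRight_self, glueRight_ne ha, glue_adj_inr_inl]
    constructor
    · rintro ⟨-, h⟩; exact h.symm
    · intro h; exact ⟨rfl, h.symm⟩
  · rw [glueRight_ne ha, glueRight_ne hb, glue_adj_inr_inr]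

/-- Inclusion of the left part as a graph homomorphism. -/
def glueHomL (F₁ : SimpleGraph V₁) (F₂ : SimpleGraph V₂) (v₁ : V₁) (v₂ : V₂) :
    F₁ →g glue F₁ F₂ v₁ v₂ :=
  ⟨Sum.inl, fun h => h⟩

/-- Inclusion of the right part as a graph homomorphism. -/
def glueHomR (F₁ : SimpleGraph V₁) (F₂ : SimpleGraph V₂) (v₁ : V₁) (v₂ : V₂) :
    F₂ →g glue F₁ F₂ v₁ v₂ :=
  ⟨glueRight v₁ v₂, fun h => glue_adj_right.mpr h⟩

@[simp] lemma glueHomL_apply (a : V₁) : glueHomL F₁ F₂ v₁ v₂ a = Sum.inl a := rfl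

@[simp] lemma glueHomR_apply (a : V₂) : glueHomR F₁ F₂ v₁ v₂ a = glueRight v₁ v₂ a := rfl

lemma glue_reach_proj₁ {x y : V₁ ⊕ {z : V₂ // z ≠ v₂}}
    (h : (glue F₁ F₂ v₁ v₂).Reachable x y) :
    F₁.Reachable (Sum.elim id (fun _ => v₁) x) (Sum.elim id (fun _ => v₁) y) := by
  obtain ⟨w⟩ := h
  induction w with
  | nil => exact Reachable.refl _
  | @cons u v w h p ih =>
      refine Reachable.trans ?_ ih
      match u, v, h with
      | .inl a, .inl b, h => exact (glue_adj_inl_inl.mp h).reachable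
      | .inl a, .inr b, h =>
          obtain ⟨rfl, -⟩ := (glue_adj_inl_inr.mp h)
          exact Reachable.refl _
      | .inr a, .inl b, h =>
          obtain ⟨rfl, -⟩ := (glue_adj_inr_inl.mp h)
          exact Reachable.refl _
      | .inr a, .inr b, h => exact Reachable.refl _

lemma glue_reach_proj₂ {x y : V₁ ⊕ {z : V₂ // z ≠ v₂}}
    (h : (glue F₁ F₂ v₁ v₂).Reachable x y) :
    F₂.Reachable (Sum.elim (fun _ => v₂) Subtype.val x) (Sum.elim (fun _ => v₂) Subtype.val y) := by
  obtain ⟨w⟩ := h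
  induction w with
  | nil => exact Reachable.refl _
  | @cons u v w h p ih =>
      refine Reachable.trans ?_ ih
      match u, v, h with
      | .inl a, .inl b, h => exact Reachable.refl _
      | .inl a, .inr b, h => exact (glue_adj_inl_inr.mp h).2.reachable
      | .inr a, .inl b, h => exact (glue_adj_inr_inl.mp h).2.symm.reachable
      | .inr a, .inr b, h => exact (glue_adj_inr_inr.mp h).reachable

lemma glue_reach_inl_inl {i j : V₁} :
    (glue F₁ F₂ v₁ v₂).Reachable (.inl i) (.inl j) ↔ F₁.Reachable i j :=
  ⟨fun h => glue_reach_proj₁ h, fun h => h.map (glueHomL F₁ F₂ v₁ v₂)⟩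

lemma glue_reach_right {i j : V₂} :
    (glue F₁ F₂ v₁ v₂).Reachable (glueRight v₁ v₂ i) (glueRight v₁ v₂ j) ↔ F₂.Reachable i j := by
  constructor
  · intro h
    have h2 := glue_reach_proj₂ h
    have hx : ∀ x : V₂, Sum.elim (fun _ => v₂) Subtype.val (glueRight v₁ v₂ x) = x := by
      intro x
      by_cases hx : x = v₂
      · subst hx; rw [glueRight_self]; rfl
      · rw [glueRight_ne hx]; rfl
    rwa [hx, hx] at h2
  · exact fun h => h.map (glueHomR F₁ F₂ v₁ v₂)

lemma glue_reach_inl_inr {i : V₁} {j : {x : V₂ // x ≠ v₂}} :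
    (glue F₁ F₂ v₁ v₂).Reachable (.inl i) (.inr j) ↔
      F₁.Reachable i v₁ ∧ F₂.Reachable v₂ j.1 := by
  constructor
  · intro h
    refine ⟨?_, ?_⟩
    · exact glue_reach_proj₁ h
    · exact glue_reach_proj₂ h
  · rintro ⟨h1, h2⟩
    have hA : (glue F₁ F₂ v₁ v₂).Reachable (.inl i) (.inl v₁) := h1.map (glueHomL F₁ F₂ v₁ v₂)
    have hB := h2.map (glueHomR F₁ F₂ v₁ v₂)
    rw [glueHomR_apply, glueHomR_apply, glueRight_self, glueRight_ne j.2] at hB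
    exact hA.trans hB

lemma glue_reach_inr_inr {a b : {x : V₂ // x ≠ v₂}} :
    (glue F₁ F₂ v₁ v₂).Reachable (.inr a) (.inr b) ↔ F₂.Reachable a.1 b.1 := by
  have := glue_reach_right (F₁ := F₁) (F₂ := F₂) (v₁ := v₁) (v₂ := v₂) (i := a.1) (j := b.1)
  rwa [glueRight_ne a.2, glueRight_ne b.2] at this

lemma glue_sdiff_inl {a b : V₁} :
    glue F₁ F₂ v₁ v₂ \ fromEdgeSet {s(Sum.inl a, Sum.inl b)}
      = glue (F₁ \ fromEdgeSet {s(a, b)}) F₂ v₁ v₂ := by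
  ext x y
  rcases x with x | x <;> rcases y with y | y <;>
    simp only [sdiff_adj, fromEdgeSet_adj, Set.mem_singleton_iff, glue_adj_inl_inl,
      glue_adj_inl_inr, glue_adj_inr_inl, glue_adj_inr_inr, Sym2.eq_iff, Sum.inl.injEq,
      Sum.inr.injEq, ne_eq, reduceCtorEq, false_and, and_false, or_self, not_false_eq_true,
      and_true, or_false, false_or, not_and, not_or] <;> tauto

lemma glue_sdiff_cross {b : {x : V₂ // x ≠ v₂}} :
    glue F₁ F₂ v₁ v₂ \ fromEdgeSet {s(Sum.inl v₁, Sum.inr b)}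
      = glue F₁ (F₂ \ fromEdgeSet {s(v₂, b.1)}) v₁ v₂ := by
  have hb := b.2
  ext x y
  rcases x with x | x <;> rcases y with y | y <;>
    simp only [sdiff_adj, fromEdgeSet_adj, Set.mem_singleton_iff, glue_adj_inl_inl,
      glue_adj_inl_inr, glue_adj_inr_inl, glue_adj_inr_inr, Sym2.eq_iff, Sum.inl.injEq,
      Sum.inr.injEq, ne_eq, reduceCtorEq, false_and, and_false, or_self, not_false_eq_true,
      and_true, or_false, false_or, not_and, not_or, Subtype.ext_iff]
  all_goals (try have hx := x.2); (try have hy := y.2); tauto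

lemma glue_sdiff_inr {a b : {x : V₂ // x ≠ v₂}} :
    glue F₁ F₂ v₁ v₂ \ fromEdgeSet {s(Sum.inr a, Sum.inr b)}
      = glue F₁ (F₂ \ fromEdgeSet {s(a.1, b.1)}) v₁ v₂ := by
  have ha := a.2
  have hb := b.2
  ext x y
  rcases x with x | x <;> rcases y with y | y <;>
    simp only [sdiff_adj, fromEdgeSet_adj, Set.mem_singleton_iff, glue_adj_inl_inl,
      glue_adj_inl_inr, glue_adj_inr_inl, glue_adj_inr_inr, Sym2.eq_iff, Sum.inl.injEq,
      Sum.inr.injEq, ne_eq, reduceCtorEq, false_and, and_false, or_self, not_false_eq_true,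
      and_true, or_false, false_or, not_and, not_or, Subtype.ext_iff]
  all_goals (try have hx := x.2); (try have hy := y.2); tauto

lemma glue_isAcyclic :
    (glue F₁ F₂ v₁ v₂).IsAcyclic ↔ F₁.IsAcyclic ∧ F₂.IsAcyclic := by
  simp only [isAcyclic_iff_forall_adj_isBridge]
  constructor
  · intro h
    constructor
    · intro a b hab
      have hb := h ((glue_adj_inl_inl (H₁ := F₁) (H₂ := F₂) (v₁ := v₁) (v₂ := v₂)).mpr hab)
      rw [isBridge_iff, deleteEdges, glue_sdiff_inl, glue_reach_inl_inl] at hb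
      exact (isBridge_iff).mpr hb
    · intro a b hab
      -- reduce to the case where neither endpoint is `v₂`, or one of them is
      by_cases ha : a = v₂
      · rw [ha] at hab ⊢
        have hbne : b ≠ v₂ := fun hc => F₂.loopless.irrefl _ (hc ▸ hab)
        have hK : (glue F₁ F₂ v₁ v₂).Adj (.inl v₁) (.inr ⟨b, hbne⟩) :=
          glue_adj_inl_inr.mpr ⟨rfl, hab⟩
        have hb := h hK
        rw [isBridge_iff, deleteEdges, glue_sdiff_cross, glue_reach_inl_inr] at hb
        refine (isBridge_iff).mpr (fun hr => hb ⟨Reachable.refl _, hr⟩)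
      · by_cases hbv : b = v₂
        · rw [hbv] at hab ⊢
          have hane : a ≠ v₂ := ha
          have hK : (glue F₁ F₂ v₁ v₂).Adj (.inl v₁) (.inr ⟨a, hane⟩) :=
            glue_adj_inl_inr.mpr ⟨rfl, hab.symm⟩
          have hb := h hK
          rw [isBridge_iff, deleteEdges, glue_sdiff_cross, glue_reach_inl_inr] at hb
          refine (isBridge_iff).mpr (fun hr => hb ⟨Reachable.refl _, ?_⟩)
          rw [show s(v₂, a) = s(a, v₂) from Sym2.eq_swap]
          exact hr.symm
        · have hK : (glue F₁ F₂ v₁ v₂).Adj (.inr ⟨a, ha⟩) (.inr ⟨b, hbv⟩) :=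
            glue_adj_inr_inr.mpr hab
          have hb := h hK
          rw [isBridge_iff, deleteEdges, glue_sdiff_inr, glue_reach_inr_inr] at hb
          exact (isBridge_iff).mpr (fun hr => hb hr)
  · rintro ⟨h1, h2⟩
    rintro (x | x) (y | y) hxy
    · have hb := h1 hxy
      rw [isBridge_iff] at hb
      refine (isBridge_iff).mpr ?_
      rw [deleteEdges, glue_sdiff_inl, glue_reach_inl_inl]
      exact hb
    · obtain ⟨hx, hadj⟩ := glue_adj_inl_inr.mp hxy
      rw [hx] at hxy ⊢
      have hb := h2 hadj
      rw [isBridge_iff] at hb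
      refine (isBridge_iff).mpr ?_
      rw [deleteEdges, glue_sdiff_cross, glue_reach_inl_inr]
      exact fun hc => hb hc.2
    · obtain ⟨hy, hadj⟩ := glue_adj_inr_inl.mp hxy
      rw [hy] at hxy ⊢
      have hb := h2 hadj
      rw [isBridge_iff] at hb
      refine (isBridge_iff).mpr (fun hr => hb ?_)
      rw [show s(Sum.inr x, Sum.inl v₁) = s(Sum.inl v₁, Sum.inr x) from Sym2.eq_swap,
        deleteEdges, glue_sdiff_cross] at hr
      exact (glue_reach_inl_inr.mp hr.symm).2
    · have hadj := glue_adj_inr_inr.mp hxy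
      have hb := h2 hadj
      rw [isBridge_iff] at hb
      refine (isBridge_iff).mpr ?_
      rw [deleteEdges, glue_sdiff_inr, glue_reach_inr_inr]
      exact hb

open Classical in
/-- Auxiliary function for components of the right part. -/
noncomputable def ccAux (F₁ : SimpleGraph V₁) (F₂ : SimpleGraph V₂) (v₁ : V₁) (v₂ : V₂)
    (b : {x : V₂ // x ≠ v₂}) :
    F₁.ConnectedComponent ⊕ {c : F₂.ConnectedComponent // c ≠ F₂.connectedComponentMk v₂} :=
  if h : F₂.Reachable b.1 v₂ then Sum.inl (F₁.connectedComponentMk v₁)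
  else Sum.inr ⟨F₂.connectedComponentMk b.1,
    fun hc => h (SimpleGraph.ConnectedComponent.eq.mp hc)⟩

lemma ccAux_pos {b : {x : V₂ // x ≠ v₂}} (h : F₂.Reachable b.1 v₂) :
    ccAux F₁ F₂ v₁ v₂ b = Sum.inl (F₁.connectedComponentMk v₁) := by
  unfold ccAux
  rw [dif_pos h]

lemma ccAux_neg {b : {x : V₂ // x ≠ v₂}} (h : ¬F₂.Reachable b.1 v₂) :
    ccAux F₁ F₂ v₁ v₂ b = Sum.inr ⟨F₂.connectedComponentMk b.1,
      fun hc => h (SimpleGraph.ConnectedComponent.eq.mp hc)⟩ := by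
  unfold ccAux
  rw [dif_neg h]

/-- The function on vertices inducing the component bijection. -/
noncomputable def glueCCfun (F₁ : SimpleGraph V₁) (F₂ : SimpleGraph V₂) (v₁ : V₁) (v₂ : V₂) :
    V₁ ⊕ {x : V₂ // x ≠ v₂} →
      F₁.ConnectedComponent ⊕ {c : F₂.ConnectedComponent // c ≠ F₂.connectedComponentMk v₂} :=
  Sum.elim (fun a => Sum.inl (F₁.connectedComponentMk a)) (ccAux F₁ F₂ v₁ v₂)

/-- The component bijection for a glued graph. -/
noncomputable def glueCCmap (F₁ : SimpleGraph V₁) (F₂ : SimpleGraph V₂) (v₁ : V₁) (v₂ : V₂) :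
    (glue F₁ F₂ v₁ v₂).ConnectedComponent →
      F₁.ConnectedComponent ⊕ {c : F₂.ConnectedComponent // c ≠ F₂.connectedComponentMk v₂} :=
  Quot.lift (glueCCfun F₁ F₂ v₁ v₂)
    (by
      rintro (a | a) (b | b) h
      · exact congrArg Sum.inl
          (SimpleGraph.ConnectedComponent.sound (glue_reach_proj₁ h))
      · have h2 : F₂.Reachable b.1 v₂ := (glue_reach_proj₂ h).symm
        simp only [glueCCfun, Sum.elim_inl, Sum.elim_inr]
        rw [ccAux_pos h2]
        exact congrArg Sum.inl
          (SimpleGraph.ConnectedComponent.sound (glue_reach_proj₁ h))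
      · have h2 : F₂.Reachable a.1 v₂ := glue_reach_proj₂ h
        simp only [glueCCfun, Sum.elim_inl, Sum.elim_inr]
        rw [ccAux_pos h2]
        exact congrArg Sum.inl
          (SimpleGraph.ConnectedComponent.sound (glue_reach_proj₁ h))
      · have h2 : F₂.Reachable a.1 b.1 := glue_reach_proj₂ h
        simp only [glueCCfun, Sum.elim_inl, Sum.elim_inr]
        by_cases ha : F₂.Reachable a.1 v₂
        · rw [ccAux_pos ha, ccAux_pos (h2.symm.trans ha)]
        · have hb : ¬F₂.Reachable b.1 v₂ := fun hb => ha (h2.trans hb)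
          rw [ccAux_neg ha, ccAux_neg hb]
          exact congrArg Sum.inr
            (Subtype.ext (SimpleGraph.ConnectedComponent.sound h2)))

lemma glueCCmap_mk (x : V₁ ⊕ {x : V₂ // x ≠ v₂}) :
    glueCCmap F₁ F₂ v₁ v₂ ((glue F₁ F₂ v₁ v₂).connectedComponentMk x)
      = glueCCfun F₁ F₂ v₁ v₂ x := rfl

lemma glueCCmap_bijective : Function.Bijective (glueCCmap F₁ F₂ v₁ v₂) := by
  constructor
  · intro c d hcd
    induction c, d using SimpleGraph.ConnectedComponent.ind₂ with
    | _ x y =>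
      rw [glueCCmap_mk, glueCCmap_mk] at hcd
      rcases x with a | a <;> rcases y with b | b <;>
        simp only [glueCCfun, Sum.elim_inl, Sum.elim_inr] at hcd
      · exact SimpleGraph.ConnectedComponent.sound
          (glue_reach_inl_inl.mpr (SimpleGraph.ConnectedComponent.eq.mp
            (Sum.inl.inj hcd)))
      · by_cases hb : F₂.Reachable b.1 v₂
        · rw [ccAux_pos hb] at hcd
          have h1 : F₁.Reachable a v₁ :=
            SimpleGraph.ConnectedComponent.eq.mp (Sum.inl.inj hcd)
          exact SimpleGraph.ConnectedComponent.sound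
            (glue_reach_inl_inr.mpr ⟨h1, hb.symm⟩)
        · rw [ccAux_neg hb] at hcd
          exact absurd hcd (by simp)
      · by_cases ha : F₂.Reachable a.1 v₂
        · rw [ccAux_pos ha] at hcd
          have h1 : F₁.Reachable b v₁ :=
            SimpleGraph.ConnectedComponent.eq.mp (Sum.inl.inj hcd.symm)
          exact (SimpleGraph.ConnectedComponent.sound
            (glue_reach_inl_inr.mpr ⟨h1, ha.symm⟩)).symm
        · rw [ccAux_neg ha] at hcd
          exact absurd hcd.symm (by simp)
      · by_cases ha : F₂.Reachable a.1 v₂ <;> by_cases hb : F₂.Reachable b.1 v₂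
        · exact SimpleGraph.ConnectedComponent.sound
            (glue_reach_inr_inr.mpr (ha.trans hb.symm))
        · rw [ccAux_pos ha, ccAux_neg hb] at hcd
          exact absurd hcd (by simp)
        · rw [ccAux_neg ha, ccAux_pos hb] at hcd
          exact absurd hcd (by simp)
        · rw [ccAux_neg ha, ccAux_neg hb] at hcd
          have h1 : F₂.Reachable a.1 b.1 :=
            SimpleGraph.ConnectedComponent.eq.mp
              (congrArg Subtype.val (Sum.inr.inj hcd))
          exact SimpleGraph.ConnectedComponent.sound (glue_reach_inr_inr.mpr h1)
  · rintro (c | ⟨c, hc⟩)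
    · induction c using SimpleGraph.ConnectedComponent.ind with
      | _ a => exact ⟨(glue F₁ F₂ v₁ v₂).connectedComponentMk (Sum.inl a), rfl⟩
    · induction c using SimpleGraph.ConnectedComponent.ind with
      | _ b =>
        have hbne : b ≠ v₂ := fun h => hc (by rw [h])
        have hnr : ¬F₂.Reachable b v₂ :=
          fun h => hc (SimpleGraph.ConnectedComponent.sound h)
        refine ⟨(glue F₁ F₂ v₁ v₂).connectedComponentMk (Sum.inr ⟨b, hbne⟩), ?_⟩
        rw [glueCCmap_mk]
        simp only [glueCCfun, Sum.elim_inr]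
        rw [ccAux_neg hnr]

lemma glue_card_cc [Finite V₁] [Finite V₂] :
    Nat.card (glue F₁ F₂ v₁ v₂).ConnectedComponent + 1
      = Nat.card F₁.ConnectedComponent + Nat.card F₂.ConnectedComponent := by
  classical
  have h1 := Nat.card_congr (Equiv.ofBijective _ (glueCCmap_bijective
    (F₁ := F₁) (F₂ := F₂) (v₁ := v₁) (v₂ := v₂)))
  rw [Nat.card_sum] at h1
  have h2 := Nat.card_congr
    (Equiv.sumCompl (fun c : F₂.ConnectedComponent => c = F₂.connectedComponentMk v₂)).symm
  rw [Nat.card_sum] at h2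
  simp only [ne_eq] at h1 h2
  have h3 : Nat.card {c : F₂.ConnectedComponent // c = F₂.connectedComponentMk v₂} = 1 := by
    rw [Nat.card_eq_one_iff_unique]
    exact ⟨⟨fun a b => Subtype.ext (a.2.trans b.2.symm)⟩, ⟨⟨_, rfl⟩⟩⟩
  omega

lemma card_cc_eq_one_iff {V : Type*} [Finite V] [Nonempty V] {G : SimpleGraph V} :
    Nat.card G.ConnectedComponent = 1 ↔ G.Connected := by
  rw [Nat.card_eq_one_iff_unique]
  constructor
  · rintro ⟨hs, -⟩
    rw [connected_iff]
    exact ⟨fun x y => SimpleGraph.ConnectedComponent.eq.mp (hs.allEq _ _), ‹_›⟩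
  · intro h
    exact ⟨h.preconnected.subsingleton_connectedComponent,
      ⟨G.connectedComponentMk (Classical.arbitrary V)⟩⟩

lemma isTree_iff_card {V : Type*} [Finite V] [Nonempty V] {G : SimpleGraph V} :
    G.IsTree ↔ G.IsAcyclic ∧ Nat.card G.ConnectedComponent = 1 := by
  rw [card_cc_eq_one_iff]
  exact ⟨fun h => ⟨h.IsAcyclic, h.isConnected⟩, fun h => ⟨h.2, h.1⟩⟩

lemma two_le_card_cc {V : Type*} [Finite V] {G : SimpleGraph V} {i j : V}
    (h : ¬G.Reachable i j) : 2 ≤ Nat.card G.ConnectedComponent := by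
  have hne : G.connectedComponentMk i ≠ G.connectedComponentMk j :=
    fun hc => h (SimpleGraph.ConnectedComponent.eq.mp hc)
  have : Nontrivial G.ConnectedComponent := ⟨_, _, hne⟩
  exact Finite.one_lt_card

lemma card_cc_pos {V : Type*} [Finite V] [Nonempty V] (G : SimpleGraph V) :
    0 < Nat.card G.ConnectedComponent := by
  have : Nonempty G.ConnectedComponent :=
    ⟨G.connectedComponentMk (Classical.arbitrary V)⟩
  exact Nat.card_pos

lemma reach_of_card_cc_eq_one {V : Type*} [Finite V] [Nonempty V] {G : SimpleGraph V}
    (h : Nat.card G.ConnectedComponent = 1) (x y : V) : G.Reachable x y :=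
  (card_cc_eq_one_iff.mp h).preconnected x y

lemma glue_mono (h1 : F₁ ≤ H₁) (h2 : F₂ ≤ H₂) :
    glue F₁ F₂ v₁ v₂ ≤ glue H₁ H₂ v₁ v₂ := by
  rintro (a | a) (b | b) h
  · exact h1 h
  · exact ⟨h.1, h2 h.2⟩
  · exact ⟨h.1, h2 h.2⟩
  · exact h2 h

lemma comap_glue_inl : (glue H₁ H₂ v₁ v₂).comap Sum.inl = H₁ := by
  ext a b; exact Iff.rfl

lemma comap_glue_right : (glue H₁ H₂ v₁ v₂).comap (glueRight v₁ v₂) = H₂ := by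
  ext a b; exact glue_adj_right

lemma glue_comap {K : SimpleGraph (V₁ ⊕ {x : V₂ // x ≠ v₂})}
    (hK : K ≤ glue H₁ H₂ v₁ v₂) :
    glue (K.comap Sum.inl) (K.comap (glueRight v₁ v₂)) v₁ v₂ = K := by
  ext x y
  rcases x with a | a <;> rcases y with b | b
  · exact Iff.rfl
  · rw [glue_adj_inl_inr]
    constructor
    · rintro ⟨ha, h⟩
      rw [SimpleGraph.comap_adj, glueRight_self, glueRight_ne b.2] at h
      rw [ha]
      exact h
    · intro h
      have ha := (hK h).1
      refine ⟨ha, ?_⟩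
      rw [SimpleGraph.comap_adj, glueRight_self, glueRight_ne b.2, ← ha]
      exact h
  · rw [glue_adj_inr_inl]
    constructor
    · rintro ⟨hb, h⟩
      rw [SimpleGraph.comap_adj, glueRight_self, glueRight_ne a.2] at h
      rw [hb]
      exact h.symm
    · intro h
      have hb := (hK h).1
      refine ⟨hb, ?_⟩
      rw [SimpleGraph.comap_adj, glueRight_self, glueRight_ne a.2, ← hb]
      exact h.symm
  · rw [glue_adj_inr_inr, SimpleGraph.comap_adj, glueRight_ne a.2, glueRight_ne b.2]

/-- The master bijection between subgraphs of a glued graph and pairs of subgraphs. -/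
def glueEquiv (H₁ : SimpleGraph V₁) (H₂ : SimpleGraph V₂) (v₁ : V₁) (v₂ : V₂)
    (R : SimpleGraph (V₁ ⊕ {x : V₂ // x ≠ v₂}) → Prop)
    (S : SimpleGraph V₁ → SimpleGraph V₂ → Prop)
    (hRS : ∀ F₁ F₂, F₁ ≤ H₁ → F₂ ≤ H₂ → (R (glue F₁ F₂ v₁ v₂) ↔ S F₁ F₂)) :
    {K : SimpleGraph (V₁ ⊕ {x : V₂ // x ≠ v₂}) // K ≤ glue H₁ H₂ v₁ v₂ ∧ R K} ≃
    {p : SimpleGraph V₁ × SimpleGraph V₂ // (p.1 ≤ H₁ ∧ p.2 ≤ H₂) ∧ S p.1 p.2} where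
  toFun K := by
    refine ⟨(K.1.comap Sum.inl, K.1.comap (glueRight v₁ v₂)), ?_⟩
    obtain ⟨K, hle, hR⟩ := K
    have h1 : K.comap Sum.inl ≤ H₁ := fun a b h => hle h
    have h2 : K.comap (glueRight v₁ v₂) ≤ H₂ := fun a b h => glue_adj_right.mp (hle h)
    refine ⟨⟨h1, h2⟩, (hRS _ _ h1 h2).mp ?_⟩
    rw [glue_comap hle]
    exact hR
  invFun p := ⟨glue p.1.1 p.1.2 v₁ v₂,
    glue_mono p.2.1.1 p.2.1.2, (hRS _ _ p.2.1.1 p.2.1.2).mpr p.2.2⟩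
  left_inv K := Subtype.ext (glue_comap K.2.1)
  right_inv p := Subtype.ext (Prod.ext comap_glue_inl comap_glue_right)

end Stmt1Aux

/-- the 2-forest counts of the glued graph. -/
theorem stmt_1 {V₁ V₂ : Type*} [Fintype V₁] [Fintype V₂] [DecidableEq V₂]
    (H₁ : SimpleGraph V₁) (H₂ : SimpleGraph V₂) (h₁ : H₁.Connected) (h₂ : H₂.Connected)
    (v₁ : V₁) (v₂ : V₂) :
    (∀ i j : V₁, fsep (glue H₁ H₂ v₁ v₂) (.inl i) (.inl j) = tau H₂ * fsep H₁ i j) ∧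
    (∀ i j : V₂, fsep (glue H₁ H₂ v₁ v₂) (glueRight v₁ v₂ i) (glueRight v₁ v₂ j)
        = tau H₁ * fsep H₂ i j) ∧
    (∀ i : V₁, i ≠ v₁ → ∀ j : {x : V₂ // x ≠ v₂},
      fsep (glue H₁ H₂ v₁ v₂) (.inl i) (.inr j)
        = tau H₂ * fsep H₁ i v₁ + tau H₁ * fsep H₂ v₂ j.1) := by
  classical
  have hne₁ : Nonempty V₁ := ⟨v₁⟩
  have hne₂ : Nonempty V₂ := ⟨v₂⟩
  refine ⟨?_, ?_, ?_⟩
  · -- part (i)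
    intro i j
    have hRS : ∀ (F : SimpleGraph V₁) (G : SimpleGraph V₂), F ≤ H₁ → G ≤ H₂ →
        (((glue F G v₁ v₂).IsAcyclic ∧
            Nat.card (glue F G v₁ v₂).ConnectedComponent = 2 ∧
            ¬(glue F G v₁ v₂).Reachable (Sum.inl i) (Sum.inl j)) ↔
          ((IsTwoForest H₁ F ∧ ¬F.Reachable i j) ∧ (G ≤ H₂ ∧ G.IsTree))) := by
      intro F G hle1 hle2
      have hcc := glue_card_cc (F₁ := F) (F₂ := G) (v₁ := v₁) (v₂ := v₂)
      constructor
      · rintro ⟨hac, hcard, hreach⟩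
        rw [glue_isAcyclic] at hac
        rw [glue_reach_inl_inl] at hreach
        have h2 := two_le_card_cc hreach
        have h3 := card_cc_pos G
        exact ⟨⟨⟨hle1, hac.1, by omega⟩, hreach⟩, hle2,
          isTree_iff_card.mpr ⟨hac.2, by omega⟩⟩
      · rintro ⟨⟨h2f, hreach⟩, -, htree⟩
        obtain ⟨-, hac1, hc1⟩ :=
          (h2f : F ≤ H₁ ∧ F.IsAcyclic ∧ Nat.card F.ConnectedComponent = 2)
        obtain ⟨hac2, hc2⟩ := isTree_iff_card.mp htree
        refine ⟨glue_isAcyclic.mpr ⟨hac1, hac2⟩, by omega, ?_⟩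
        rw [glue_reach_inl_inl]
        exact hreach
    have E := glueEquiv H₁ H₂ v₁ v₂
      (fun K => K.IsAcyclic ∧ Nat.card K.ConnectedComponent = 2 ∧
        ¬K.Reachable (Sum.inl i) (Sum.inl j))
      (fun F G => (IsTwoForest H₁ F ∧ ¬F.Reachable i j) ∧ (G ≤ H₂ ∧ G.IsTree)) hRS
    have E2 := ((Equiv.subtypeEquivRight
      (p := fun H : SimpleGraph (V₁ ⊕ {x : V₂ // x ≠ v₂}) =>
        IsTwoForest (glue H₁ H₂ v₁ v₂) H ∧ ¬H.Reachable (Sum.inl i) (Sum.inl j))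
      (q := fun H => H ≤ glue H₁ H₂ v₁ v₂ ∧
        (H.IsAcyclic ∧ Nat.card H.ConnectedComponent = 2 ∧
          ¬H.Reachable (Sum.inl i) (Sum.inl j)))
      (fun H => by unfold IsTwoForest; tauto)).trans E).trans
      ((Equiv.subtypeEquivRight
        (q := fun p : SimpleGraph V₁ × SimpleGraph V₂ =>
          (IsTwoForest H₁ p.1 ∧ ¬p.1.Reachable i j) ∧ (p.2 ≤ H₂ ∧ p.2.IsTree))
        (fun p => by unfold IsTwoForest; tauto)).trans
        (Equiv.subtypeProdEquivProd
          (p := fun F : SimpleGraph V₁ => IsTwoForest H₁ F ∧ ¬F.Reachable i j)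
          (q := fun G : SimpleGraph V₂ => G ≤ H₂ ∧ G.IsTree)))
    have hcard := Nat.card_congr E2
    rw [Nat.card_prod] at hcard
    rw [mul_comm]
    exact hcard
  · -- part (ii)
    intro i j
    have hRS : ∀ (F : SimpleGraph V₁) (G : SimpleGraph V₂), F ≤ H₁ → G ≤ H₂ →
        (((glue F G v₁ v₂).IsAcyclic ∧
            Nat.card (glue F G v₁ v₂).ConnectedComponent = 2 ∧
            ¬(glue F G v₁ v₂).Reachable (glueRight v₁ v₂ i) (glueRight v₁ v₂ j)) ↔
          ((F ≤ H₁ ∧ F.IsTree) ∧ (IsTwoForest H₂ G ∧ ¬G.Reachable i j))) := by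
      intro F G hle1 hle2
      have hcc := glue_card_cc (F₁ := F) (F₂ := G) (v₁ := v₁) (v₂ := v₂)
      constructor
      · rintro ⟨hac, hcard, hreach⟩
        rw [glue_isAcyclic] at hac
        rw [glue_reach_right] at hreach
        have h2 := two_le_card_cc hreach
        have h3 := card_cc_pos F
        exact ⟨⟨hle1, isTree_iff_card.mpr ⟨hac.1, by omega⟩⟩,
          ⟨hle2, hac.2, by omega⟩, hreach⟩
      · rintro ⟨⟨-, htree⟩, h2f, hreach⟩
        obtain ⟨-, hac2, hc2⟩ :=
          (h2f : G ≤ H₂ ∧ G.IsAcyclic ∧ Nat.card G.ConnectedComponent = 2)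
        obtain ⟨hac1, hc1⟩ := isTree_iff_card.mp htree
        refine ⟨glue_isAcyclic.mpr ⟨hac1, hac2⟩, by omega, ?_⟩
        rw [glue_reach_right]
        exact hreach
    have E := glueEquiv H₁ H₂ v₁ v₂
      (fun K => K.IsAcyclic ∧ Nat.card K.ConnectedComponent = 2 ∧
        ¬K.Reachable (glueRight v₁ v₂ i) (glueRight v₁ v₂ j))
      (fun F G => (F ≤ H₁ ∧ F.IsTree) ∧ (IsTwoForest H₂ G ∧ ¬G.Reachable i j)) hRS
    have E2 := ((Equiv.subtypeEquivRight
      (p := fun H : SimpleGraph (V₁ ⊕ {x : V₂ // x ≠ v₂}) =>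
        IsTwoForest (glue H₁ H₂ v₁ v₂) H ∧
          ¬H.Reachable (glueRight v₁ v₂ i) (glueRight v₁ v₂ j))
      (q := fun H => H ≤ glue H₁ H₂ v₁ v₂ ∧
        (H.IsAcyclic ∧ Nat.card H.ConnectedComponent = 2 ∧
          ¬H.Reachable (glueRight v₁ v₂ i) (glueRight v₁ v₂ j)))
      (fun H => by unfold IsTwoForest; tauto)).trans E).trans
      ((Equiv.subtypeEquivRight
        (q := fun p : SimpleGraph V₁ × SimpleGraph V₂ =>
          (p.1 ≤ H₁ ∧ p.1.IsTree) ∧ (IsTwoForest H₂ p.2 ∧ ¬p.2.Reachable i j))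
        (fun p => by unfold IsTwoForest; tauto)).trans
        (Equiv.subtypeProdEquivProd
          (p := fun F : SimpleGraph V₁ => F ≤ H₁ ∧ F.IsTree)
          (q := fun G : SimpleGraph V₂ => IsTwoForest H₂ G ∧ ¬G.Reachable i j)))
    have hcard := Nat.card_congr E2
    rw [Nat.card_prod] at hcard
    exact hcard
  · -- part (iii)
    intro i hiv j
    have hRS : ∀ (F : SimpleGraph V₁) (G : SimpleGraph V₂), F ≤ H₁ → G ≤ H₂ →
        (((glue F G v₁ v₂).IsAcyclic ∧
            Nat.card (glue F G v₁ v₂).ConnectedComponent = 2 ∧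
            ¬(glue F G v₁ v₂).Reachable (Sum.inl i) (Sum.inr j)) ↔
          (((IsTwoForest H₁ F ∧ ¬F.Reachable i v₁) ∧ (G ≤ H₂ ∧ G.IsTree)) ∨
            ((F ≤ H₁ ∧ F.IsTree) ∧ (IsTwoForest H₂ G ∧ ¬G.Reachable v₂ j.1)))) := by
      intro F G hle1 hle2
      have hcc := glue_card_cc (F₁ := F) (F₂ := G) (v₁ := v₁) (v₂ := v₂)
      constructor
      · rintro ⟨hac, hcard, hreach⟩
        rw [glue_isAcyclic] at hac
        rw [glue_reach_inl_inr] at hreach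
        have h3 := card_cc_pos F
        have h4 := card_cc_pos G
        by_cases hc2 : Nat.card G.ConnectedComponent = 1
        · have hr2 : G.Reachable v₂ j.1 := reach_of_card_cc_eq_one hc2 _ _
          have hr1 : ¬F.Reachable i v₁ := fun hr => hreach ⟨hr, hr2⟩
          exact Or.inl ⟨⟨⟨hle1, hac.1, by omega⟩, hr1⟩, hle2,
            isTree_iff_card.mpr ⟨hac.2, hc2⟩⟩
        · have hc1 : Nat.card F.ConnectedComponent = 1 := by omega
          have hr1 : F.Reachable i v₁ := reach_of_card_cc_eq_one hc1 _ _
          have hr2 : ¬G.Reachable v₂ j.1 := fun hr => hreach ⟨hr1, hr⟩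
          exact Or.inr ⟨⟨hle1, isTree_iff_card.mpr ⟨hac.1, hc1⟩⟩,
            ⟨hle2, hac.2, by omega⟩, hr2⟩
      · rintro (⟨⟨h2f, hr1⟩, -, htree⟩ | ⟨⟨-, htree⟩, h2f, hr2⟩)
        · obtain ⟨-, hac1, hc1⟩ :=
            (h2f : F ≤ H₁ ∧ F.IsAcyclic ∧ Nat.card F.ConnectedComponent = 2)
          obtain ⟨hac2, hc2⟩ := isTree_iff_card.mp htree
          refine ⟨glue_isAcyclic.mpr ⟨hac1, hac2⟩, by omega, ?_⟩
          rw [glue_reach_inl_inr]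
          exact fun hc => hr1 hc.1
        · obtain ⟨-, hac2, hc2⟩ :=
            (h2f : G ≤ H₂ ∧ G.IsAcyclic ∧ Nat.card G.ConnectedComponent = 2)
          obtain ⟨hac1, hc1⟩ := isTree_iff_card.mp htree
          refine ⟨glue_isAcyclic.mpr ⟨hac1, hac2⟩, by omega, ?_⟩
          rw [glue_reach_inl_inr]
          exact fun hc => hr2 hc.2
    have E := glueEquiv H₁ H₂ v₁ v₂
      (fun K => K.IsAcyclic ∧ Nat.card K.ConnectedComponent = 2 ∧
        ¬K.Reachable (Sum.inl i) (Sum.inr j))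
      (fun F G => ((IsTwoForest H₁ F ∧ ¬F.Reachable i v₁) ∧ (G ≤ H₂ ∧ G.IsTree)) ∨
        ((F ≤ H₁ ∧ F.IsTree) ∧ (IsTwoForest H₂ G ∧ ¬G.Reachable v₂ j.1))) hRS
    have hdisj : Disjoint
        (fun p : SimpleGraph V₁ × SimpleGraph V₂ =>
          (IsTwoForest H₁ p.1 ∧ ¬p.1.Reachable i v₁) ∧ (p.2 ≤ H₂ ∧ p.2.IsTree))
        (fun p : SimpleGraph V₁ × SimpleGraph V₂ =>
          (p.1 ≤ H₁ ∧ p.1.IsTree) ∧ (IsTwoForest H₂ p.2 ∧ ¬p.2.Reachable v₂ j.1)) := by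
      intro c hcA hcB p hp
      have hA := hcA p hp
      have hB := hcB p hp
      obtain ⟨-, hac1, hc1⟩ :=
        (hA.1.1 : p.1 ≤ H₁ ∧ p.1.IsAcyclic ∧ Nat.card p.1.ConnectedComponent = 2)
      obtain ⟨-, hc1'⟩ := isTree_iff_card.mp hB.1.2
      exact absurd (hc1'.symm.trans hc1) (by norm_num)
    have E2 := ((Equiv.subtypeEquivRight
      (p := fun H : SimpleGraph (V₁ ⊕ {x : V₂ // x ≠ v₂}) =>
        IsTwoForest (glue H₁ H₂ v₁ v₂) H ∧ ¬H.Reachable (Sum.inl i) (Sum.inr j))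
      (q := fun H => H ≤ glue H₁ H₂ v₁ v₂ ∧
        (H.IsAcyclic ∧ Nat.card H.ConnectedComponent = 2 ∧
          ¬H.Reachable (Sum.inl i) (Sum.inr j)))
      (fun H => by unfold IsTwoForest; tauto)).trans E).trans
      ((Equiv.subtypeEquivRight
        (q := fun p : SimpleGraph V₁ × SimpleGraph V₂ =>
          ((IsTwoForest H₁ p.1 ∧ ¬p.1.Reachable i v₁) ∧ (p.2 ≤ H₂ ∧ p.2.IsTree)) ∨
            ((p.1 ≤ H₁ ∧ p.1.IsTree) ∧ (IsTwoForest H₂ p.2 ∧ ¬p.2.Reachable v₂ j.1)))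
        (fun p => by unfold IsTwoForest; tauto)).trans
        ((subtypeOrEquiv _ _ hdisj).trans
          (Equiv.sumCongr
            (Equiv.subtypeProdEquivProd
              (p := fun F : SimpleGraph V₁ => IsTwoForest H₁ F ∧ ¬F.Reachable i v₁)
              (q := fun G : SimpleGraph V₂ => G ≤ H₂ ∧ G.IsTree))
            (Equiv.subtypeProdEquivProd
              (p := fun F : SimpleGraph V₁ => F ≤ H₁ ∧ F.IsTree)
              (q := fun G : SimpleGraph V₂ => IsTwoForest H₂ G ∧ ¬G.Reachable v₂ j.1)))))
    have hcard := Nat.card_congr E2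
    rw [Nat.card_sum, Nat.card_prod, Nat.card_prod] at hcard
    rw [mul_comm (tau H₂)]
    exact hcard

end Braess
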